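/- Let r ≥ 2 and n ≥ r. Among all complete r-partite graphs H on n vertices with r nonempty parts, the r-clique spectral radius ρ_r(H) is maximal precisely for the r-partite Turán graph T_r(n); that is, ρ_r(H) ≤ ρ_r(T_r(n)) for every such H, with equality if and only if H is isomorphic to T_r(n). -/

import Mathlib

open Finset

noncomputable def rCliques {V : Type*} [Fintype V] [DecidableEq V]
    (G : SimpleGraph V) (r : ℕ) : Finset (Finset V) :=
  letI := Classical.decPred (fun K : Finset V => G.IsNClique r K)
  Finset.univ.filter (fun K => G.IsNClique r K)

noncomputable def cliqueSpecRad {V : Type*} [Fintype V] [DecidableEq V]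
    (G : SimpleGraph V) (r : ℕ) : ℝ :=
  sSup { y : ℝ | ∃ x : V → ℝ, (∀ v, 0 ≤ x v) ∧ (∑ v, x v ^ r) = 1 ∧
    y = r * ∑ K ∈ rCliques G r, ∏ i ∈ K, x i }

lemma mem_rCliques {V : Type*} [Fintype V] [DecidableEq V] {G : SimpleGraph V} {r : ℕ}
    {K : Finset V} : K ∈ rCliques G r ↔ G.IsNClique r K := by
  classical
  simp [rCliques]

lemma isNClique_map_iso {V W : Type*} {G : SimpleGraph V} {G' : SimpleGraph W}
    (e : G ≃g G') {r : ℕ} {K : Finset V} [DecidableEq W] :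
    G'.IsNClique r (K.image e) ↔ G.IsNClique r K := by
  constructor
  · rintro ⟨hc, hcard⟩
    constructor
    · intro a ha b hb hab
      have := hc (Finset.mem_coe.2 (Finset.mem_image_of_mem e ha))
        (Finset.mem_coe.2 (Finset.mem_image_of_mem e hb))
        (fun h => hab (e.injective h))
      exact e.map_rel_iff.1 this
    · rwa [Finset.card_image_of_injective _ e.injective] at hcard
  · rintro ⟨hc, hcard⟩
    constructor
    · intro a ha b hb hab
      rcases Finset.mem_image.1 (Finset.mem_coe.1 ha) with ⟨a', ha', rfl⟩
      rcases Finset.mem_image.1 (Finset.mem_coe.1 hb) with ⟨b', hb', rfl⟩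
      exact e.map_rel_iff.2 (hc ha' hb' (fun h => hab (by rw [h])))
    · rwa [Finset.card_image_of_injective _ e.injective]

lemma sum_rCliques_iso {V W : Type*} [Fintype V] [DecidableEq V] [Fintype W] [DecidableEq W]
    {G : SimpleGraph V} {G' : SimpleGraph W} (e : G ≃g G') (r : ℕ) (x : W → ℝ) :
    ∑ K ∈ rCliques G' r, ∏ i ∈ K, x i = ∑ K ∈ rCliques G r, ∏ i ∈ K, x (e i) := by
  refine (Finset.sum_bij' (fun K (_ : K ∈ rCliques G r) => K.image ⇑e)
    (fun K (_ : K ∈ rCliques G' r) => K.image ⇑e.symm) ?_ ?_ ?_ ?_ ?_).symm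
  · intro K hK
    rw [mem_rCliques] at hK ⊢
    exact (isNClique_map_iso e).2 hK
  · intro K hK
    rw [mem_rCliques] at hK ⊢
    exact (isNClique_map_iso e.symm).2 hK
  · intro K _
    simp [Finset.image_image, Function.comp_def]
  · intro K _
    simp [Finset.image_image, Function.comp_def]
  · intro K _
    exact (Finset.prod_image (fun a _ b _ h => e.injective h)).symm

lemma specRadSet_sub {V W : Type*} [Fintype V] [DecidableEq V] [Fintype W] [DecidableEq W]
    (G : SimpleGraph V) (G' : SimpleGraph W) (e : G ≃g G') (r : ℕ) :
    { y : ℝ | ∃ x : V → ℝ, (∀ v, 0 ≤ x v) ∧ (∑ v, x v ^ r) = 1 ∧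
        y = r * ∑ K ∈ rCliques G r, ∏ i ∈ K, x i } ⊆
      { y : ℝ | ∃ x : W → ℝ, (∀ v, 0 ≤ x v) ∧ (∑ v, x v ^ r) = 1 ∧
        y = r * ∑ K ∈ rCliques G' r, ∏ i ∈ K, x i } := by
  intro y hy
  obtain ⟨x, hx0, hx1, rfl⟩ := hy
  refine ⟨fun w => x (e.symm w), fun w => hx0 _, ?_, ?_⟩
  · exact (Equiv.sum_comp e.symm.toEquiv (fun v => x v ^ r)).trans hx1
  · rw [sum_rCliques_iso e r (fun w => x (e.symm w))]
    simp

lemma cliqueSpecRad_iso {V W : Type*} [Fintype V] [DecidableEq V] [Fintype W] [DecidableEq W]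
    {G : SimpleGraph V} {G' : SimpleGraph W} (e : G ≃g G') (r : ℕ) :
    cliqueSpecRad G r = cliqueSpecRad G' r := by
  unfold cliqueSpecRad
  congr 1
  exact (specRadSet_sub G G' e r).antisymm (specRadSet_sub G' G e.symm r)

section CMP
variable {r : ℕ} (M : Fin r → ℕ)

lemma vmk_inj (f : ∀ i, Fin (M i)) :
    Function.Injective (fun i => (⟨i, f i⟩ : Σ i, Fin (M i))) := by
  intro a b h
  exact congrArg Sigma.fst h

lemma cmp_sum_cliques (x : (Σ i : Fin r, Fin (M i)) → ℝ) :
    ∑ K ∈ rCliques (SimpleGraph.completeMultipartiteGraph (fun i => Fin (M i))) r, ∏ v ∈ K, x v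
      = ∏ i, ∑ a, x ⟨i, a⟩ := by
  classical
  rw [show (∏ i, ∑ a, x ⟨i, a⟩) = ∏ i, ∑ a ∈ univ, x ⟨i, a⟩ from rfl, Finset.prod_univ_sum]
  refine (Finset.sum_bij
    (fun p (_ : p ∈ Fintype.piFinset (fun i => (univ : Finset (Fin (M i))))) =>
      Finset.univ.image (fun i => (⟨i, p i⟩ : Σ i, Fin (M i)))) ?_ ?_ ?_ ?_).symm
  · -- maps to cliques
    intro p _
    rw [mem_rCliques]
    constructor
    · intro u hu v hv huv
      rcases Finset.mem_image.1 (Finset.mem_coe.1 hu) with ⟨i, _, rfl⟩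
      rcases Finset.mem_image.1 (Finset.mem_coe.1 hv) with ⟨j, _, rfl⟩
      have hij : i ≠ j := fun h => huv (by subst h; rfl)
      exact hij
    · rw [Finset.card_image_of_injective _ (vmk_inj M p), Finset.card_univ, Fintype.card_fin]
  · -- injective
    intro p _ q _ h
    funext i
    have h2 : Finset.univ.image (fun i => (⟨i, p i⟩ : Σ i, Fin (M i)))
        = Finset.univ.image (fun j => (⟨j, q j⟩ : Σ i, Fin (M i))) := h
    have : (⟨i, p i⟩ : Σ i, Fin (M i)) ∈ Finset.univ.image (fun j => (⟨j, q j⟩ : Σ i, Fin (M i))) := by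
      rw [← h2]; exact Finset.mem_image_of_mem _ (Finset.mem_univ i)
    rcases Finset.mem_image.1 this with ⟨j, _, hj⟩
    obtain ⟨rfl, h3⟩ := Sigma.mk.inj_iff.1 hj
    exact (eq_of_heq h3).symm
  · -- surjective
    intro K hK
    rw [mem_rCliques] at hK
    have hinjOn : Set.InjOn Sigma.fst (K : Set (Σ i : Fin r, Fin (M i))) := by
      intro u hu v hv huv
      by_contra hne
      exact (hK.1 hu hv hne) huv
    have hcard : (K.image Sigma.fst).card = r := by
      rw [Finset.card_image_of_injOn hinjOn, hK.2]
    have huniv : K.image Sigma.fst = (univ : Finset (Fin r)) :=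
      Finset.eq_univ_of_card _ (by rw [hcard, Fintype.card_fin])
    have hex : ∀ i : Fin r, ∃ a : Fin (M i), (⟨i, a⟩ : Σ i, Fin (M i)) ∈ K := by
      intro i
      have : i ∈ K.image Sigma.fst := huniv ▸ Finset.mem_univ i
      rcases Finset.mem_image.1 this with ⟨⟨j, a⟩, hv, rfl⟩
      exact ⟨a, hv⟩
    choose p hp using hex
    refine ⟨p, by simp, ?_⟩
    have hsub : Finset.univ.image (fun i => (⟨i, p i⟩ : Σ i, Fin (M i))) ⊆ K := by
      intro v hv
      rcases Finset.mem_image.1 hv with ⟨i, _, rfl⟩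
      exact hp i
    refine Finset.eq_of_subset_of_card_le hsub ?_
    rw [hK.2, Finset.card_image_of_injective _ (vmk_inj M p), Finset.card_univ, Fintype.card_fin]
  · -- values
    intro p _
    exact (Finset.prod_image (fun a _ b _ h => vmk_inj M p h)).symm

end CMP

section Analytic
variable {r : ℕ} {M : Fin r → ℕ}

lemma cmp_bound (hr : 2 ≤ r) (hM : ∀ i, 1 ≤ M i) (x : (Σ i : Fin r, Fin (M i)) → ℝ)
    (hx0 : ∀ v, 0 ≤ x v) (hx1 : ∑ v, x v ^ r = 1) :
    (r : ℝ) * ∏ i, ∑ a, x ⟨i, a⟩ ≤ (∏ i, (M i : ℝ)) ^ (((r : ℝ) - 1) / r) := by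
  have hr0 : (0:ℝ) < r := by positivity
  have hrne : (r:ℝ) ≠ 0 := ne_of_gt hr0
  set S : Fin r → ℝ := fun i => ∑ a, x ⟨i, a⟩ with hSdef
  set T : Fin r → ℝ := fun i => ∑ a, x ⟨i, a⟩ ^ r with hTdef
  have hS0 : ∀ i, 0 ≤ S i := fun i => Finset.sum_nonneg (fun a _ => hx0 _)
  have hT0 : ∀ i, 0 ≤ T i := fun i => Finset.sum_nonneg (fun a _ => pow_nonneg (hx0 _) _)
  have hTsum : ∑ i, T i = 1 := by
    rw [← hx1, ← Finset.univ_sigma_univ, Finset.sum_sigma]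
  have hMpos : ∀ i, (0:ℝ) < (M i : ℝ) := fun i => by exact_mod_cast (hM i)
  have hP0 : (0:ℝ) < ∏ i, (M i : ℝ) := Finset.prod_pos (fun i _ => hMpos i)
  -- power mean step
  have hpow : ∀ i, S i ^ r ≤ (M i : ℝ) ^ (r - 1) * T i := by
    intro i
    have h := pow_sum_div_card_le_sum_pow
      (s := (univ : Finset (Fin (M i)))) (f := fun a => x ⟨i, a⟩)
      (fun a _ => hx0 _) (r - 1)
    rw [show r - 1 + 1 = r by omega] at h
    have hcard : (#(univ : Finset (Fin (M i))) : ℝ) = (M i : ℝ) := by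
      simp
    rw [hcard] at h
    rw [div_le_iff₀ (pow_pos (hMpos i) _)] at h
    calc S i ^ r ≤ T i * (M i:ℝ) ^ (r-1) := h
      _ = (M i:ℝ) ^ (r-1) * T i := by ring
  have hstep : ∀ i, S i ≤ ((M i : ℝ) ^ (r - 1) * T i) ^ (1 / (r:ℝ)) := by
    intro i
    have h2 := Real.rpow_le_rpow (pow_nonneg (hS0 i) r) (hpow i) (by positivity : (0:ℝ) ≤ 1/(r:ℝ))
    rwa [← Real.rpow_natCast (S i) r, ← Real.rpow_mul (hS0 i),
      mul_one_div, div_self hrne, Real.rpow_one] at h2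
  have hprod : ∏ i, S i ≤ ∏ i, ((M i : ℝ) ^ (r - 1) * T i) ^ (1 / (r:ℝ)) :=
    Finset.prod_le_prod (fun i _ => hS0 i) (fun i _ => hstep i)
  have hfac : ∏ i, ((M i : ℝ) ^ (r - 1) * T i) ^ (1 / (r:ℝ))
      = ((∏ i, (M i : ℝ)) ^ (r - 1)) ^ (1/(r:ℝ)) * (∏ i, T i) ^ (1/(r:ℝ)) := by
    rw [Real.finset_prod_rpow _ _ (fun i _ => mul_nonneg (by positivity) (hT0 i)) _, Finset.prod_mul_distrib,
      ← Finset.prod_pow, Real.mul_rpow (by positivity) (Finset.prod_nonneg (fun i _ => hT0 i))]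
  have hgm : (∏ i, T i) ^ (1/(r:ℝ)) ≤ 1 / (r:ℝ) := by
    have h3 : ∏ i, (T i) ^ (1/(r:ℝ)) ≤ ∑ i, (1/(r:ℝ)) * T i :=
      Real.geom_mean_le_arith_mean_weighted univ (fun _ => 1/(r:ℝ)) T
        (fun i _ => by positivity)
        (by rw [Finset.sum_const, Finset.card_univ, Fintype.card_fin, nsmul_eq_mul,
              mul_one_div, div_self hrne])
        (fun i _ => hT0 i)
    rw [← Finset.mul_sum, hTsum, mul_one] at h3
    rwa [← Real.finset_prod_rpow _ _ (fun i _ => hT0 i) _]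
  have hMexp : ((∏ i, (M i : ℝ)) ^ (r - 1)) ^ (1/(r:ℝ))
      = (∏ i, (M i : ℝ)) ^ (((r:ℝ) - 1) / r) := by
    have hexp : ((r - 1 : ℕ) : ℝ) * (1/(r:ℝ)) = ((r:ℝ) - 1) / r := by
      rw [Nat.cast_sub (by omega : 1 ≤ r)]
      push_cast
      ring
    rw [← Real.rpow_natCast (∏ i, (M i : ℝ)) (r - 1), ← Real.rpow_mul hP0.le, hexp]
  calc (r:ℝ) * ∏ i, S i
      ≤ (r:ℝ) * (((∏ i, (M i : ℝ)) ^ (r-1)) ^ (1/(r:ℝ)) * (∏ i, T i) ^ (1/(r:ℝ))) := by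
        rw [← hfac]; exact mul_le_mul_of_nonneg_left hprod hr0.le
    _ ≤ (r:ℝ) * (((∏ i, (M i : ℝ)) ^ (r-1)) ^ (1/(r:ℝ)) * (1/(r:ℝ))) := by
        apply mul_le_mul_of_nonneg_left _ hr0.le
        exact mul_le_mul_of_nonneg_left hgm (by positivity)
    _ = ((∏ i, (M i : ℝ)) ^ (r-1)) ^ (1/(r:ℝ)) := by
        field_simp
    _ = (∏ i, (M i : ℝ)) ^ (((r:ℝ) - 1) / r) := hMexp

lemma cmp_attain (hr : 2 ≤ r) (hM : ∀ i, 1 ≤ M i) :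
    ∃ x : (Σ i : Fin r, Fin (M i)) → ℝ, (∀ v, 0 ≤ x v) ∧ (∑ v, x v ^ r) = 1 ∧
      (r : ℝ) * ∏ i, ∑ a, x ⟨i, a⟩ = (∏ i, (M i : ℝ)) ^ (((r:ℝ) - 1) / r) := by
  have hr0 : (0:ℝ) < r := by positivity
  have hrne : (r:ℝ) ≠ 0 := ne_of_gt hr0
  have hMpos : ∀ i, (0:ℝ) < (M i : ℝ) := fun i => by exact_mod_cast (hM i)
  have hP0 : (0:ℝ) < ∏ i, (M i : ℝ) := Finset.prod_pos (fun i _ => hMpos i)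
  set c : Fin r → ℝ := fun i => ((r:ℝ) * (M i : ℝ)) ^ (-(1/(r:ℝ))) with hcdef
  have hbase : ∀ i, (0:ℝ) < (r:ℝ) * (M i : ℝ) := fun i => mul_pos hr0 (hMpos i)
  have hc0 : ∀ i, 0 < c i := fun i => Real.rpow_pos_of_pos (hbase i) _
  have hcr : ∀ i, c i ^ r = ((r:ℝ) * (M i : ℝ))⁻¹ := by
    intro i
    rw [hcdef]
    rw [← Real.rpow_natCast (((r:ℝ) * (M i : ℝ)) ^ (-(1/(r:ℝ)))) r,
      ← Real.rpow_mul (hbase i).le]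
    rw [show (-(1/(r:ℝ))) * (r:ℕ) = -1 by field_simp]
    exact Real.rpow_neg_one _
  refine ⟨fun v => c v.1, fun v => (hc0 v.1).le, ?_, ?_⟩
  · rw [← Finset.univ_sigma_univ, Finset.sum_sigma]
    simp only [Finset.sum_const, Finset.card_univ, Fintype.card_fin, nsmul_eq_mul]
    have : ∀ i : Fin r, (M i : ℝ) * c i ^ r = 1 / r := by
      intro i
      have h1 : (M i:ℝ) ≠ 0 := ne_of_gt (hMpos i)
      rw [hcr i]
      field_simp
      try ring
    rw [Finset.sum_congr rfl (fun i _ => this i), Finset.sum_const, Finset.card_univ,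
      Fintype.card_fin, nsmul_eq_mul, mul_one_div, div_self hrne]
  · have hsum : ∀ i : Fin r, ∑ a : Fin (M i), c i = (M i : ℝ) * c i := by
      intro i
      rw [Finset.sum_const, Finset.card_univ, Fintype.card_fin, nsmul_eq_mul]
    rw [Finset.prod_congr rfl (fun i _ => hsum i), Finset.prod_mul_distrib]
    have hprodc : ∏ i, c i = ((r:ℝ))⁻¹ * (∏ i, (M i : ℝ)) ^ (-(1/(r:ℝ))) := by
      rw [hcdef, Real.finset_prod_rpow _ _ (fun i _ => (hbase i).le) _,
        Finset.prod_mul_distrib, Finset.prod_const, Finset.card_univ, Fintype.card_fin,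
        Real.mul_rpow (by positivity) (Finset.prod_nonneg (fun i _ => (hMpos i).le)),
        ← Real.rpow_natCast ((r:ℝ)) r, ← Real.rpow_mul hr0.le,
        show ((r:ℕ):ℝ) * (-(1/(r:ℝ))) = -1 by field_simp, Real.rpow_neg_one]
    rw [hprodc]
    rw [show (r:ℝ) * ((∏ i, (M i:ℝ)) * ((r:ℝ)⁻¹ * (∏ i, (M i : ℝ)) ^ (-(1/(r:ℝ)))))
        = (∏ i, (M i:ℝ)) ^ (1:ℝ) * (∏ i, (M i : ℝ)) ^ (-(1/(r:ℝ))) by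
      rw [Real.rpow_one]; field_simp; try ring]
    rw [← Real.rpow_add hP0]
    congr 1
    field_simp
    try ring

lemma cmp_specRad (hr : 2 ≤ r) (hM : ∀ i, 1 ≤ M i) :
    cliqueSpecRad (SimpleGraph.completeMultipartiteGraph (fun i => Fin (M i))) r
      = (∏ i, (M i : ℝ)) ^ (((r:ℝ) - 1) / r) := by
  obtain ⟨x0, h0, h1, h2⟩ := cmp_attain hr hM
  have hbdd : ∀ y ∈ { y : ℝ | ∃ x : (Σ i : Fin r, Fin (M i)) → ℝ, (∀ v, 0 ≤ x v) ∧
      (∑ v, x v ^ r) = 1 ∧ y = r * ∑ K ∈ rCliques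
        (SimpleGraph.completeMultipartiteGraph (fun i => Fin (M i))) r, ∏ i ∈ K, x i },
      y ≤ (∏ i, (M i : ℝ)) ^ (((r:ℝ) - 1) / r) := by
    rintro y ⟨x, hx0, hx1, rfl⟩
    rw [cmp_sum_cliques]
    exact cmp_bound hr hM x hx0 hx1
  have hmem : (∏ i, (M i : ℝ)) ^ (((r:ℝ) - 1) / r) ∈ { y : ℝ | ∃ x : (Σ i : Fin r, Fin (M i)) → ℝ,
      (∀ v, 0 ≤ x v) ∧ (∑ v, x v ^ r) = 1 ∧ y = r * ∑ K ∈ rCliques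
        (SimpleGraph.completeMultipartiteGraph (fun i => Fin (M i))) r, ∏ i ∈ K, x i } :=
    ⟨x0, h0, h1, by rw [cmp_sum_cliques]; exact h2.symm⟩
  apply le_antisymm
  · exact csSup_le ⟨_, hmem⟩ hbdd
  · exact le_csSup ⟨_, hbdd⟩ hmem

end Analytic

/-- The balanced part sizes of the Turán graph. -/
def bal (n r : ℕ) : Fin r → ℕ := fun i => n / r + if (i : ℕ) < n % r then 1 else 0

lemma card_filter_lt (r k : ℕ) (hk : k ≤ r) :
    #(univ.filter (fun i : Fin r => (i : ℕ) < k)) = k := by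
  have : univ.filter (fun i : Fin r => (i : ℕ) < k) = univ.image (Fin.castLE hk) := by
    ext i
    simp only [mem_filter, mem_univ, true_and]
    constructor
    · intro hi
      exact Finset.mem_image.2 ⟨⟨i, hi⟩, Finset.mem_univ _, rfl⟩
    · intro hi
      rcases Finset.mem_image.1 hi with ⟨j, _, rfl⟩
      exact j.isLt
  rw [this, Finset.card_image_of_injective _ (Fin.castLE_injective hk), card_univ,
    Fintype.card_fin]

lemma bal_pos (n r : ℕ) (hr : 0 < r) (hrn : r ≤ n) (i : Fin r) : 1 ≤ bal n r i := by
  have : 1 ≤ n / r := (Nat.one_le_div_iff hr).2 hrn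
  unfold bal
  omega

lemma sum_bal (n r : ℕ) (hr : 0 < r) : ∑ i, bal n r i = n := by
  unfold bal
  rw [Finset.sum_add_distrib, Finset.sum_const, card_univ, Fintype.card_fin, smul_eq_mul]
  have h1 : ∑ i : Fin r, (if (i : ℕ) < n % r then 1 else 0)
      = #(univ.filter (fun i : Fin r => (i : ℕ) < n % r)) := by
    rw [Finset.card_filter]
  rw [h1, card_filter_lt r (n % r) (le_of_lt (Nat.mod_lt n hr))]
  have := Nat.div_add_mod n r
  omega

lemma filter_bal_card (n r : ℕ) (hr : 0 < r) :
    #(univ.filter (fun i : Fin r => bal n r i = n / r + 1)) = n % r := by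
  have he : univ.filter (fun i : Fin r => bal n r i = n / r + 1)
      = univ.filter (fun i : Fin r => (i : ℕ) < n % r) := by
    apply Finset.filter_congr
    intro i _
    unfold bal
    by_cases h : (i : ℕ) < n % r <;> simp [h]
  rw [he, card_filter_lt r (n % r) (le_of_lt (Nat.mod_lt n hr))]

/-- The Turán graph is isomorphic to a balanced complete multipartite graph. -/
noncomputable def turanIso (n r : ℕ) (hr : 0 < r) (hrn : r ≤ n) :
    SimpleGraph.turanGraph n r ≃g
      SimpleGraph.completeMultipartiteGraph (fun i : Fin r => Fin (bal n r i)) where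
  toEquiv := {
    toFun := fun v => ⟨⟨(v : ℕ) % r, Nat.mod_lt _ hr⟩, ⟨(v : ℕ) / r, by
      unfold bal
      by_cases h : (v : ℕ) % r < n % r
      · simp only [h, if_true]
        have : (v : ℕ) / r ≤ n / r := Nat.div_le_div_right (le_of_lt v.isLt)
        omega
      · simp only [h, if_false, add_zero]
        by_contra hc
        push_neg at hc
        have h2 := Nat.div_add_mod n r
        have h3 := Nat.div_add_mod (v : ℕ) r
        have h4 : r * (n / r) ≤ r * ((v:ℕ) / r) := Nat.mul_le_mul_left r hc
        have := v.isLt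
        omega⟩⟩
    invFun := fun p => ⟨(p.2 : ℕ) * r + (p.1 : ℕ), by
      have hb := p.2.isLt
      unfold bal at hb
      have h2 := Nat.div_add_mod n r
      by_cases h : (p.1 : ℕ) < n % r
      · simp only [h, if_true] at hb
        have hle : (p.2 : ℕ) ≤ n / r := by omega
        have h5 : (p.2 : ℕ) * r ≤ r * (n / r) := by
          rw [Nat.mul_comm]; exact Nat.mul_le_mul_left r hle
        omega
      · simp only [h, if_false, add_zero] at hb
        have h5 : ((p.2 : ℕ) + 1) * r ≤ r * (n / r) := by
          rw [Nat.mul_comm]; exact Nat.mul_le_mul_left r hb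
        have h7 : ((p.2 : ℕ) + 1) * r = (p.2 : ℕ) * r + r := by ring
        have h6 := p.1.isLt
        omega⟩
    left_inv := by
      intro v
      apply Fin.ext
      simp only []
      have h := Nat.div_add_mod (v : ℕ) r
      have h2 : ((v : ℕ) / r) * r = r * ((v : ℕ) / r) := Nat.mul_comm _ _
      omega
    right_inv := by
      rintro ⟨i, a⟩
      have h1 : ((a : ℕ) * r + (i : ℕ)) % r = (i : ℕ) := by
        rw [Nat.mul_comm, Nat.mul_add_mod, Nat.mod_eq_of_lt i.isLt]
      have h2 : ((a : ℕ) * r + (i : ℕ)) / r = (a : ℕ) := by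
        rw [Nat.mul_comm, Nat.mul_add_div hr, Nat.div_eq_of_lt i.isLt, add_zero]
      have hfst : (⟨((a : ℕ) * r + (i : ℕ)) % r, Nat.mod_lt _ hr⟩ : Fin r) = i := Fin.ext h1
      apply Sigma.ext
      · exact hfst
      · rw [Fin.heq_ext_iff (congrArg (fun j => bal n r j) hfst)]
        exact h2 }
  map_rel_iff' := by
    intro v w
    simp only [Equiv.coe_fn_mk, SimpleGraph.comap_adj, SimpleGraph.top_adj]
    constructor
    · intro h hmod
      exact h (by apply Fin.ext; exact hmod)
    · intro h hc
      exact h (congrArg Fin.val hc)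


lemma exists_perm_of_balanced {r n : ℕ} (hr : 0 < r) (m : Fin r → ℕ)
    (h1 : ∀ i, 1 ≤ m i) (hsum : ∑ i, m i = n) (hb : ∀ i j, m i ≤ m j + 1) :
    ∃ σ : Equiv.Perm (Fin r), ∀ i, m (σ i) = bal n r i := by
  classical
  obtain ⟨i₀, -, hmin⟩ := Finset.exists_min_image univ m ⟨⟨0, hr⟩, mem_univ _⟩
  set a := m i₀ with ha
  have hvals : ∀ i, m i = a ∨ m i = a + 1 := by
    intro i
    have h2 := hmin i (mem_univ i)
    have h3 := hb i i₀
    omega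
  set p := fun i : Fin r => m i = a + 1 with hp
  set k := #(univ.filter p) with hk
  have hkr : k < r := by
    have : i₀ ∉ univ.filter p := by
      simp only [mem_filter, mem_univ, true_and, hp]
      omega
    have h4 : (univ.filter p) ≠ univ := fun h => this (by rw [h]; exact mem_univ i₀)
    have := Finset.card_lt_card (Finset.ssubset_univ_iff.2 h4)
    rwa [card_univ, Fintype.card_fin] at this
  have hsum2 : n = a * r + k := by
    rw [← hsum, ← Finset.sum_filter_add_sum_filter_not univ p m]
    have e1 : ∑ i ∈ univ.filter p, m i = (a + 1) * k := by
      rw [Finset.sum_congr rfl (fun i hi => (Finset.mem_filter.1 hi).2), Finset.sum_const,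
        smul_eq_mul, mul_comm]
    have e2 : ∑ i ∈ univ.filter (fun i => ¬ p i), m i = a * (r - k) := by
      have : ∀ i ∈ univ.filter (fun i => ¬ p i), m i = a := by
        intro i hi
        have := (Finset.mem_filter.1 hi).2
        rcases hvals i with h | h
        · exact h
        · exact absurd h this
      rw [Finset.sum_congr rfl this, Finset.sum_const, smul_eq_mul, mul_comm]
      congr 1
      rw [Finset.filter_not, Finset.card_sdiff_of_subset (Finset.filter_subset _ _), card_univ,
        Fintype.card_fin]
    rw [e1, e2]
    have hkle : k ≤ r := le_of_lt hkr
    cases Nat.eq_or_lt_of_le hkle <;> nlinarith [Nat.sub_add_cancel hkle]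
  have hadiv : a = n / r ∧ k = n % r := by
    constructor
    · rw [hsum2, mul_comm, Nat.mul_add_div hr, Nat.div_eq_of_lt hkr, add_zero]
    · rw [hsum2, mul_comm, Nat.mul_add_mod, Nat.mod_eq_of_lt hkr]
  obtain ⟨haa, hkk⟩ := hadiv
  set q := fun i : Fin r => bal n r i = n / r + 1 with hq
  have hbalvals : ∀ i, bal n r i = n / r ∨ bal n r i = n / r + 1 := by
    intro i
    unfold bal
    by_cases h : (i:ℕ) < n % r <;> simp [h]
  have hcard1 : Fintype.card {i // q i} = Fintype.card {i // p i} := by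
    rw [Fintype.card_subtype, Fintype.card_subtype]
    rw [show (univ.filter q).card = n % r from filter_bal_card n r hr, ← hk, hkk]
  have hcard2 : Fintype.card {i // ¬ q i} = Fintype.card {i // ¬ p i} := by
    rw [Fintype.card_subtype_compl, Fintype.card_subtype_compl, hcard1]
  let e1 : {i // q i} ≃ {i // p i} := Fintype.equivOfCardEq hcard1
  let e2 : {i // ¬ q i} ≃ {i // ¬ p i} := Fintype.equivOfCardEq hcard2
  refine ⟨(Equiv.sumCompl q).symm.trans ((Equiv.sumCongr e1 e2).trans (Equiv.sumCompl p)), ?_⟩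
  intro i
  by_cases hqi : q i
  · have : (Equiv.sumCompl q).symm i = Sum.inl ⟨i, hqi⟩ :=
      Equiv.sumCompl_symm_apply_of_pos (p := q) hqi
    simp only [Equiv.trans_apply, this, Equiv.sumCongr_apply, Sum.map_inl,
      Equiv.sumCompl_apply_inl]
    have hm : m ((e1 ⟨i, hqi⟩) : Fin r) = a + 1 := (e1 ⟨i, hqi⟩).2
    have hbi : bal n r i = n / r + 1 := hqi
    rw [hm, hbi, haa]
  · have : (Equiv.sumCompl q).symm i = Sum.inr ⟨i, hqi⟩ :=
      Equiv.sumCompl_symm_apply_of_neg (p := q) hqi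
    simp only [Equiv.trans_apply, this, Equiv.sumCongr_apply, Sum.map_inr,
      Equiv.sumCompl_apply_inr]
    have h5 : ¬ (m ((e2 ⟨i, hqi⟩) : Fin r) = a + 1) := (e2 ⟨i, hqi⟩).2
    have h6 : m ((e2 ⟨i, hqi⟩) : Fin r) = a := by
      rcases hvals ((e2 ⟨i, hqi⟩) : Fin r) with h | h
      · exact h
      · exact absurd h h5
    have h7 : bal n r i = n / r := by
      rcases hbalvals i with h | h
      · exact h
      · exact absurd h hqi
    rw [h6, h7, haa]

lemma prod_le_bal_aux {r n : ℕ} (hr : 0 < r) :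
    ∀ N : ℕ, ∀ m : Fin r → ℕ, (∑ i, m i * m i) ≤ N → (∀ i, 1 ≤ m i) → (∑ i, m i = n) →
      (∏ i, m i ≤ ∏ i, bal n r i) ∧
        (∏ i, m i = ∏ i, bal n r i → ∀ i j, m i ≤ m j + 1) := by
  intro N
  induction N with
  | zero =>
    intro m hN h1 hsum
    exfalso
    have : 1 ≤ ∑ i, m i * m i := by
      have hne : (univ : Finset (Fin r)).Nonempty := ⟨⟨0, hr⟩, mem_univ _⟩
      calc 1 ≤ m ⟨0, hr⟩ * m ⟨0, hr⟩ := Nat.one_le_iff_ne_zero.2 (by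
              have := h1 ⟨0, hr⟩; positivity)
        _ ≤ ∑ i, m i * m i := Finset.single_le_sum (f := fun i => m i * m i) (fun i _ => Nat.zero_le _) (mem_univ _)
    omega
  | succ N ih =>
    intro m hN h1 hsum
    by_cases hbal : ∀ i j, m i ≤ m j + 1
    · obtain ⟨σ, hσ⟩ := exists_perm_of_balanced hr m h1 hsum hbal
      have heq : ∏ i, m i = ∏ i, bal n r i := by
        rw [← Equiv.prod_comp σ m]
        exact Finset.prod_congr rfl (fun i _ => hσ i)
      exact ⟨le_of_eq heq, fun _ => hbal⟩
    · push_neg at hbal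
      obtain ⟨i, j, hij⟩ := hbal
      have hij2 : m j + 2 ≤ m i := by omega
      have hne : i ≠ j := by
        intro h; rw [h] at hij2; omega
      set m' := Function.update (Function.update m i (m i - 1)) j (m j + 1) with hm'
      have hm'j : m' j = m j + 1 := by
        rw [hm', Function.update_self]
      have hm'i : m' i = m i - 1 := by
        rw [hm', Function.update_of_ne hne, Function.update_self]
      have hm'k : ∀ k, k ≠ i → k ≠ j → m' k = m k := by
        intro k hki hkj
        rw [hm', Function.update_of_ne hkj, Function.update_of_ne hki]
      have h1' : ∀ k, 1 ≤ m' k := by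
        intro k
        by_cases hki : k = i
        · rw [hki, hm'i]; omega
        · by_cases hkj : k = j
          · rw [hkj, hm'j]; omega
          · rw [hm'k k hki hkj]; exact h1 k
      -- decompositions over univ.erase j |>.erase i
      have hmemj : j ∈ (univ : Finset (Fin r)) := mem_univ _
      have hmemi : i ∈ (univ : Finset (Fin r)).erase j := Finset.mem_erase.2 ⟨hne, mem_univ _⟩
      -- sums
      have hsum_m : ∑ k, m k = m j + (m i + ∑ k ∈ ((univ : Finset (Fin r)).erase j).erase i, m k) := by
        rw [← Finset.add_sum_erase _ m hmemj, ← Finset.add_sum_erase _ m hmemi]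
      have hsum_m' : ∑ k, m' k = m' j + (m' i + ∑ k ∈ ((univ : Finset (Fin r)).erase j).erase i, m' k) := by
        rw [← Finset.add_sum_erase _ m' hmemj, ← Finset.add_sum_erase _ m' hmemi]
      have hrest_eq : ∑ k ∈ ((univ : Finset (Fin r)).erase j).erase i, m' k
          = ∑ k ∈ ((univ : Finset (Fin r)).erase j).erase i, m k := by
        apply Finset.sum_congr rfl
        intro k hk
        have hki := (Finset.mem_erase.1 hk).1
        have hkj := (Finset.mem_erase.1 (Finset.mem_erase.1 hk).2).1
        exact hm'k k hki hkj
      have hsum' : ∑ k, m' k = n := by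
        rw [hsum_m', hrest_eq, hm'j, hm'i, ← hsum, hsum_m]
        omega
      -- squares
      have hsq_m : ∑ k, m k * m k = m j * m j + (m i * m i
          + ∑ k ∈ ((univ : Finset (Fin r)).erase j).erase i, m k * m k) := by
        rw [← Finset.add_sum_erase _ (fun k => m k * m k) hmemj,
          ← Finset.add_sum_erase _ (fun k => m k * m k) hmemi]
      have hsq_m' : ∑ k, m' k * m' k = m' j * m' j + (m' i * m' i
          + ∑ k ∈ ((univ : Finset (Fin r)).erase j).erase i, m' k * m' k) := by
        rw [← Finset.add_sum_erase _ (fun k => m' k * m' k) hmemj,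
          ← Finset.add_sum_erase _ (fun k => m' k * m' k) hmemi]
      have hsqrest : ∑ k ∈ ((univ : Finset (Fin r)).erase j).erase i, m' k * m' k
          = ∑ k ∈ ((univ : Finset (Fin r)).erase j).erase i, m k * m k := by
        apply Finset.sum_congr rfl
        intro k hk
        have hki := (Finset.mem_erase.1 hk).1
        have hkj := (Finset.mem_erase.1 (Finset.mem_erase.1 hk).2).1
        rw [hm'k k hki hkj]
      have hsqlt : m' j * m' j + m' i * m' i < m j * m j + m i * m i := by
        rw [hm'j, hm'i]
        obtain ⟨c, hc⟩ := Nat.exists_eq_add_of_le hij2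
        rw [hc]
        have h9 : m j + 2 + c - 1 = m j + 1 + c := by omega
        rw [h9]
        nlinarith
      have hNle : ∑ k, m' k * m' k ≤ N := by
        have hA : ∑ k, m' k * m' k = m' j * m' j + (m' i * m' i
            + ∑ k ∈ ((univ : Finset (Fin r)).erase j).erase i, m k * m k) := by
          rw [hsq_m', hsqrest]
        rw [hsq_m] at hN
        omega
      -- products
      have hprod_m : ∏ k, m k = m j * (m i * ∏ k ∈ ((univ : Finset (Fin r)).erase j).erase i, m k) := by
        rw [← Finset.mul_prod_erase _ m hmemj, ← Finset.mul_prod_erase _ m hmemi]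
      have hprod_m' : ∏ k, m' k = m' j * (m' i * ∏ k ∈ ((univ : Finset (Fin r)).erase j).erase i, m' k) := by
        rw [← Finset.mul_prod_erase _ m' hmemj, ← Finset.mul_prod_erase _ m' hmemi]
      have hprodrest : ∏ k ∈ ((univ : Finset (Fin r)).erase j).erase i, m' k
          = ∏ k ∈ ((univ : Finset (Fin r)).erase j).erase i, m k := by
        apply Finset.prod_congr rfl
        intro k hk
        have hki := (Finset.mem_erase.1 hk).1
        have hkj := (Finset.mem_erase.1 (Finset.mem_erase.1 hk).2).1
        rw [hm'k k hki hkj]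
      have hQ : 1 ≤ ∏ k ∈ ((univ : Finset (Fin r)).erase j).erase i, m k :=
        Finset.one_le_prod' (fun k _ => h1 k)
      have hlt : ∏ k, m k < ∏ k, m' k := by
        rw [hprod_m, hprod_m', hprodrest, hm'j, hm'i]
        obtain ⟨c, hc⟩ := Nat.exists_eq_add_of_le hij2
        rw [hc]
        have h9 : m j + 2 + c - 1 = m j + 1 + c := by omega
        rw [h9]
        set Q := ∏ k ∈ ((univ : Finset (Fin r)).erase j).erase i, m k with hQdef
        have hkey : m j * (m j + 2 + c) < (m j + 1) * (m j + 1 + c) := by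
          have hx : (m j + 1) * (m j + 1 + c) = m j * (m j + 2 + c) + 1 + c := by ring
          rw [hx]
          exact Nat.lt_add_right c (Nat.lt_succ_self _)
        calc m j * ((m j + 2 + c) * Q) = (m j * (m j + 2 + c)) * Q := by ring
          _ < ((m j + 1) * (m j + 1 + c)) * Q := by
              exact Nat.mul_lt_mul_of_lt_of_le hkey (le_refl Q) hQ
          _ = (m j + 1) * ((m j + 1 + c) * Q) := by ring
      obtain ⟨hle', _⟩ := ih m' hNle h1' hsum'
      constructor
      · exact le_of_lt (lt_of_lt_of_le hlt hle')
      · intro heq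
        exfalso
        have : ∏ k, m k < ∏ k, bal n r k := lt_of_lt_of_le hlt hle'
        omega

lemma prod_le_bal {r n : ℕ} (hr : 0 < r) (m : Fin r → ℕ)
    (h1 : ∀ i, 1 ≤ m i) (hsum : ∑ i, m i = n) :
    (∏ i, m i ≤ ∏ i, bal n r i) ∧
      (∏ i, m i = ∏ i, bal n r i → ∃ σ : Equiv.Perm (Fin r), ∀ i, m (σ i) = bal n r i) := by
  obtain ⟨hle, heq⟩ := prod_le_bal_aux hr (∑ i, m i * m i) m (le_refl _) h1 hsum
  exact ⟨hle, fun h => exists_perm_of_balanced hr m h1 hsum (heq h)⟩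

def cmpIso {r : ℕ} (m m' : Fin r → ℕ) (σ : Equiv.Perm (Fin r)) (h : ∀ i, m (σ i) = m' i) :
    SimpleGraph.completeMultipartiteGraph (fun i => Fin (m i)) ≃g
      SimpleGraph.completeMultipartiteGraph (fun i => Fin (m' i)) where
  toEquiv := Equiv.sigmaCongr σ.symm (fun i => finCongr (by
    rw [← h (σ.symm i), Equiv.apply_symm_apply]))
  map_rel_iff' := by
    rintro ⟨i, a⟩ ⟨j, b⟩
    simp only [SimpleGraph.comap_adj, SimpleGraph.top_adj, Equiv.sigmaCongr,
      Equiv.sigmaCongrRight, Equiv.sigmaCongrLeft, Equiv.trans_apply, Equiv.coe_fn_mk]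
    exact (Equiv.injective σ.symm).ne_iff


theorem stmt_5 (r n : ℕ) (hr : 2 ≤ r) (hn : r ≤ n) (H : SimpleGraph (Fin n))
    (hH : ∃ m : Fin r → ℕ, (∀ i, 1 ≤ m i) ∧ (∑ i, m i) = n ∧
      Nonempty (H ≃g SimpleGraph.completeMultipartiteGraph (fun i : Fin r => Fin (m i)))) :
    cliqueSpecRad H r ≤ cliqueSpecRad (SimpleGraph.turanGraph n r) r ∧
      (cliqueSpecRad H r = cliqueSpecRad (SimpleGraph.turanGraph n r) r ↔
        Nonempty (H ≃g SimpleGraph.turanGraph n r)) := by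
  obtain ⟨m, hm1, hmsum, ⟨e⟩⟩ := hH
  have hr0 : 0 < r := by omega
  have hbal1 : ∀ i, 1 ≤ bal n r i := bal_pos n r hr0 hn
  have hspecH : cliqueSpecRad H r = (∏ i, (m i : ℝ)) ^ (((r:ℝ) - 1) / r) :=
    (cliqueSpecRad_iso e r).trans (cmp_specRad hr hm1)
  have hspecT : cliqueSpecRad (SimpleGraph.turanGraph n r) r
      = (∏ i, (bal n r i : ℝ)) ^ (((r:ℝ) - 1) / r) :=
    (cliqueSpecRad_iso (turanIso n r hr0 hn) r).trans (cmp_specRad hr hbal1)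
  have hcastm : (∏ i, (m i : ℝ)) = ((∏ i, m i : ℕ) : ℝ) := by push_cast; rfl
  have hcastb : (∏ i, (bal n r i : ℝ)) = ((∏ i, bal n r i : ℕ) : ℝ) := by push_cast; rfl
  obtain ⟨hprodle, hprodeq⟩ := prod_le_bal hr0 m hm1 hmsum
  have hc0 : (0:ℝ) ≤ ((r:ℝ) - 1) / r := by
    apply div_nonneg
    · have : (2:ℝ) ≤ (r:ℝ) := by exact_mod_cast hr
      linarith
    · positivity
  have hcpos : (0:ℝ) < ((r:ℝ) - 1) / r := by
    apply div_pos
    · have : (2:ℝ) ≤ (r:ℝ) := by exact_mod_cast hr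
      linarith
    · positivity
  constructor
  · rw [hspecH, hspecT, hcastm, hcastb]
    exact Real.rpow_le_rpow (by positivity) (by exact_mod_cast hprodle) hc0
  · constructor
    · intro heq
      rw [hspecH, hspecT, hcastm, hcastb] at heq
      have hprodeq' : ∏ i, m i = ∏ i, bal n r i := by
        by_contra hne
        have hlt : ∏ i, m i < ∏ i, bal n r i := lt_of_le_of_ne hprodle hne
        have hltR : ((∏ i, m i : ℕ) : ℝ) < ((∏ i, bal n r i : ℕ) : ℝ) := by exact_mod_cast hlt
        have := Real.rpow_lt_rpow (by positivity : (0:ℝ) ≤ ((∏ i, m i : ℕ) : ℝ)) hltR hcpos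
        rw [heq] at this
        exact lt_irrefl _ this
      obtain ⟨σ, hσ⟩ := hprodeq hprodeq'
      exact ⟨e.trans ((cmpIso m (bal n r) σ hσ).trans (turanIso n r hr0 hn).symm)⟩
    · rintro ⟨f⟩
      exact cliqueSpecRad_iso f r
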